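/- Let n ≥ 1, let k ≥ 3 be an integer, let a, b ∈ F_{2^n} be nonzero, and let K be an algebraic closure of F_{2^n}. Then the polynomial b·(Y^{2^k−1}+1)·U³ + a·(Y^{2^{k−1}−1}+1)·U + (Y^{2^{k−2}−1}+1), regarded as a cubic polynomial in the variable U with coefficients in the rational function field K(Y), has no root in K(Y); in particular, it is irreducible as a polynomial in U over K(Y). -/

import Mathlib

open Polynomial

private lemma sqfree_aux {K : Type*} [Field K] [CharP K 2] {m : ℕ} (hm : m % 2 = 1) :
    Squarefree ((X : K[X]) ^ m + 1) := by
  have h1 : 1 ≤ m := by omega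
  have h2K : (2 : K) = 0 := by exact_mod_cast CharP.cast_eq_zero K 2
  have h2 : (2 : K[X]) = 0 := by
    rw [(map_ofNat (C : K →+* K[X]) 2).symm, h2K, map_zero]
  have hcast : ((m : ℕ) : K) = 1 := by
    obtain ⟨t, rfl⟩ : ∃ t, m = 2 * t + 1 := ⟨m / 2, by omega⟩
    push_cast
    rw [h2K]; ring
  have hder : derivative ((X : K[X]) ^ m + 1) = X ^ (m - 1) := by
    rw [derivative_add, derivative_one, add_zero, derivative_X_pow, hcast, map_one, one_mul]
  have hcopX : IsCoprime ((X : K[X]) ^ m + 1) X := by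
    refine ⟨1, X ^ (m - 1), ?_⟩
    have hx : (X : K[X]) ^ (m - 1) * X = X ^ m := by
      rw [← pow_succ]; congr 1; omega
    rw [one_mul, hx]
    linear_combination (X : K[X]) ^ m * h2
  have hsep : ((X : K[X]) ^ m + 1).Separable := by
    rw [Polynomial.separable_def, hder]
    exact hcopX.pow_right
  exact hsep.squarefree

private lemma noroot_aux {K : Type*} [Field K] [CharP K 2]
    {k : ℕ} (hk : 3 ≤ k) {a' b' : K} (hb' : b' ≠ 0) (u : RatFunc K)
    (hu : RatFunc.C b' * ((RatFunc.X : RatFunc K) ^ (2 ^ k - 1) + 1) * u ^ 3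
        + RatFunc.C a' * ((RatFunc.X : RatFunc K) ^ (2 ^ (k - 1) - 1) + 1) * u
        + ((RatFunc.X : RatFunc K) ^ (2 ^ (k - 2) - 1) + 1) = 0) : False := by
  set m1 := 2 ^ k - 1 with hm1
  set m2 := 2 ^ (k - 1) - 1 with hm2
  set m3 := 2 ^ (k - 2) - 1 with hm3
  have hpow : ∀ j : ℕ, 1 ≤ j → 2 ^ j % 2 = 0 := by
    intro j hj
    obtain ⟨i, rfl⟩ : ∃ i, j = i + 1 := ⟨j - 1, by omega⟩
    have : 2 ^ (i + 1) = 2 * 2 ^ i := by ring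
    omega
  have h23 : (2:ℕ) ^ (k - 2) ≤ 2 ^ (k - 1) := Nat.pow_le_pow_right (by norm_num) (by omega)
  have h12 : (2:ℕ) ^ (k - 1) < 2 ^ k := Nat.pow_lt_pow_right (by norm_num) (by omega)
  have h2pos : 2 ≤ 2 ^ (k - 2) := by
    calc 2 = 2 ^ 1 := rfl
    _ ≤ 2 ^ (k - 2) := Nat.pow_le_pow_right (by norm_num) (by omega)
  have hm1odd : m1 % 2 = 1 := by have := hpow k (by omega); omega
  have hm2odd : m2 % 2 = 1 := by have := hpow (k - 1) (by omega); omega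
  have hm3odd : m3 % 2 = 1 := by have := hpow (k - 2) (by omega); omega
  set φ := algebraMap K[X] (RatFunc K) with hφ
  have hu2 : φ (C b' * (X ^ m1 + 1)) * u ^ 3 + φ (C a' * (X ^ m2 + 1)) * u
      + φ (X ^ m3 + 1) = 0 := by
    simpa only [map_add, map_mul, map_pow, map_one, RatFunc.algebraMap_C,
      RatFunc.algebraMap_X, hφ] using hu
  set g := u.denom with hg
  set h := u.num with hh
  have hg0 : φ g ≠ 0 := RatFunc.algebraMap_ne_zero (RatFunc.denom_ne_zero u)
  have hnum : φ h = u * φ g := by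
    conv_rhs => rw [← RatFunc.num_div_denom u]
    rw [div_mul_cancel₀ _ hg0]
  have hpoly : C b' * (X ^ m1 + 1) * h ^ 3 + C a' * (X ^ m2 + 1) * (h * g ^ 2)
      + (X ^ m3 + 1) * g ^ 3 = 0 := by
    apply IsFractionRing.injective K[X] (RatFunc K)
    rw [map_zero]
    have expand : φ (C b' * (X ^ m1 + 1) * h ^ 3 + C a' * (X ^ m2 + 1) * (h * g ^ 2)
        + (X ^ m3 + 1) * g ^ 3)
        = (φ (C b' * (X ^ m1 + 1)) * u ^ 3 + φ (C a' * (X ^ m2 + 1)) * u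
          + φ (X ^ m3 + 1)) * φ g ^ 3 := by
      simp only [map_add, map_mul, map_pow, hnum]
      ring
    rw [expand, hu2, zero_mul]
  have hdvd : g ^ 2 ∣ C b' * (X ^ m1 + 1) * h ^ 3 := by
    have he : C b' * (X ^ m1 + 1) * h ^ 3
        = -(g ^ 2 * (C a' * (X ^ m2 + 1) * h + (X ^ m3 + 1) * g)) := by
      linear_combination hpoly
    rw [he]
    exact dvd_neg.mpr (dvd_mul_right _ _)
  have hcop : IsCoprime h g := RatFunc.isCoprime_num_denom u
  have hdvd2 : g ^ 2 ∣ C b' * (X ^ m1 + 1) := by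
    have hc : IsCoprime (g ^ 2) (h ^ 3) := hcop.symm.pow
    exact hc.dvd_of_dvd_mul_right hdvd
  have hdvd3 : g ^ 2 ∣ (X ^ m1 + 1 : K[X]) := by
    have h' := hdvd2.mul_left (C b'⁻¹)
    rwa [← mul_assoc, ← C_mul, inv_mul_cancel₀ hb', C_1, one_mul] at h'
  have hgu : IsUnit g := (sqfree_aux hm1odd) g (by rw [← sq]; exact hdvd3)
  have hg1 : g = 1 := (RatFunc.monic_denom u).eq_one_of_isUnit hgu
  rw [hg1, one_pow, one_pow, mul_one, mul_one] at hpoly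
  have hp3ne : (X ^ m3 + 1 : K[X]) ≠ 0 := by
    rw [← C_1]
    exact X_pow_add_C_ne_zero (by omega) 1
  have hh0 : h ≠ 0 := by
    rintro h0
    rw [h0] at hpoly
    exact hp3ne (by linear_combination hpoly)
  have h2 : (2 : K[X]) = 0 := by
    have h2K : (2 : K) = 0 := by exact_mod_cast CharP.cast_eq_zero K 2
    rw [(map_ofNat (C : K →+* K[X]) 2).symm, h2K, map_zero]
  have hEq : C b' * (X ^ m1 + 1) * h ^ 3 = C a' * (X ^ m2 + 1) * h + (X ^ m3 + 1) := by
    linear_combination hpoly - (C a' * (X ^ m2 + 1) * h + (X ^ m3 + 1)) * h2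
  have hdegp1 : (X ^ m1 + 1 : K[X]).natDegree = m1 := by
    rw [← C_1]; exact natDegree_X_pow_add_C
  have hdegp2 : (X ^ m2 + 1 : K[X]).natDegree = m2 := by
    rw [← C_1]; exact natDegree_X_pow_add_C
  have hdegp3 : (X ^ m3 + 1 : K[X]).natDegree = m3 := by
    rw [← C_1]; exact natDegree_X_pow_add_C
  have hp1ne : (X ^ m1 + 1 : K[X]) ≠ 0 := by
    rw [← C_1]; exact X_pow_add_C_ne_zero (by omega) 1
  have hCb : (C b' : K[X]) ≠ 0 := C_ne_zero.mpr hb'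
  have hL : (C b' * (X ^ m1 + 1) * h ^ 3).natDegree = m1 + 3 * h.natDegree := by
    rw [natDegree_mul (mul_ne_zero hCb hp1ne) (pow_ne_zero _ hh0), natDegree_mul hCb hp1ne,
      natDegree_C, natDegree_pow, hdegp1]
    ring
  have hb1 : (C a' * (X ^ m2 + 1) * h).natDegree ≤ m2 + h.natDegree := by
    refine le_trans natDegree_mul_le ?_
    have : (C a' * (X ^ m2 + 1)).natDegree ≤ m2 := le_trans natDegree_mul_le (by simp [hdegp2])
    omega
  have hR : (C a' * (X ^ m2 + 1) * h + (X ^ m3 + 1)).natDegree ≤ max (m2 + h.natDegree) m3 :=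
    le_trans (natDegree_add_le _ _) (max_le_max hb1 hdegp3.le)
  have hd := congrArg natDegree hEq
  rw [hL] at hd
  rw [← hd] at hR
  rcases max_cases (m2 + h.natDegree) m3 with ⟨heq, _⟩ | ⟨heq, _⟩ <;> rw [heq] at hR <;> omega




/-- Let `F = F_{2^n}`, `K` its algebraic closure, `k ≥ 3`, and `a, b ∈ F`
nonzero.  Then the cubic polynomial
`b·(Y^{2^k−1}+1)·U³ + a·(Y^{2^{k−1}−1}+1)·U + (Y^{2^{k−2}−1}+1)` in the variable `U`
over the rational function field `K(Y)` has no root in `K(Y)`; in particular it is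
irreducible over `K(Y)`. -/
theorem stmt_12 (n : ℕ) (hn : 1 ≤ n) (F : Type) [Field F] [Fintype F]
    (hcard : Fintype.card F = 2 ^ n) (k : ℕ) (hk : 3 ≤ k)
    (a b : F) (ha : a ≠ 0) (hb : b ≠ 0)
    (P : Polynomial (RatFunc (AlgebraicClosure F)))
    (hP : P = Polynomial.C (RatFunc.C (algebraMap F (AlgebraicClosure F) b) *
            ((RatFunc.X : RatFunc (AlgebraicClosure F)) ^ (2 ^ k - 1) + 1)) *
            Polynomial.X ^ 3
        + Polynomial.C (RatFunc.C (algebraMap F (AlgebraicClosure F) a) *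
            ((RatFunc.X : RatFunc (AlgebraicClosure F)) ^ (2 ^ (k - 1) - 1) + 1)) *
            Polynomial.X
        + Polynomial.C ((RatFunc.X : RatFunc (AlgebraicClosure F)) ^ (2 ^ (k - 2) - 1) + 1)) :
    (∀ u : RatFunc (AlgebraicClosure F), Polynomial.eval u P ≠ 0) ∧ Irreducible P := by
  have h2F : (2 : F) = 0 := by
    have hc := FiniteField.cast_card_eq_zero F
    rw [hcard] at hc
    push_cast at hc
    exact pow_eq_zero_iff (by omega) |>.mp hc
  haveI hcharF : CharP F 2 := by
    have hdvd : ringChar F ∣ 2 := ringChar.dvd (by exact_mod_cast h2F)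
    have hne1 : ringChar F ≠ 1 := CharP.ringChar_ne_one
    have heq2 : ringChar F = 2 := by
      rcases (Nat.dvd_prime Nat.prime_two).mp hdvd with h | h
      · exact absurd h hne1
      · exact h
    exact heq2 ▸ ringChar.charP F
  haveI hcharK : CharP (AlgebraicClosure F) 2 := inferInstance
  set b' := algebraMap F (AlgebraicClosure F) b with hb'def
  have hb' : b' ≠ 0 := fun hb0 => hb ((algebraMap F (AlgebraicClosure F)).injective
    (by rw [← hb'def, hb0, map_zero]))
  have hroot : ∀ u : RatFunc (AlgebraicClosure F), Polynomial.eval u P ≠ 0 := by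
    intro u hu
    rw [hP] at hu
    simp only [eval_add, eval_mul, eval_pow, eval_C, eval_X] at hu
    exact noroot_aux hk hb' u hu
  refine ⟨hroot, ?_⟩
  -- degree of P is 3
  have hc3ne : RatFunc.C b' * ((RatFunc.X : RatFunc (AlgebraicClosure F)) ^ (2 ^ k - 1) + 1)
      ≠ 0 := by
    have hp1ne : ((X : (AlgebraicClosure F)[X]) ^ (2 ^ k - 1) + 1) ≠ 0 := by
      rw [← C_1]
      refine X_pow_add_C_ne_zero ?_ 1
      have : (2:ℕ) ^ 3 ≤ 2 ^ k := Nat.pow_le_pow_right (by norm_num) hk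
      omega
    have := RatFunc.algebraMap_ne_zero (K := AlgebraicClosure F)
      (mul_ne_zero (C_ne_zero.mpr hb') hp1ne)
    rwa [map_mul, map_add, map_pow, map_one, RatFunc.algebraMap_C, RatFunc.algebraMap_X] at this
  have hdeg3 : (C (RatFunc.C b' * ((RatFunc.X : RatFunc (AlgebraicClosure F)) ^ (2 ^ k - 1) + 1))
      * (X : (RatFunc (AlgebraicClosure F))[X]) ^ 3).degree = 3 := by
    exact_mod_cast degree_C_mul_X_pow 3 hc3ne
  have h1lt : ∀ y : RatFunc (AlgebraicClosure F), (C y * X).degree < 3 := fun y =>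
    lt_of_le_of_lt (degree_C_mul_X_le y) (by decide)
  have h0lt : ∀ y : RatFunc (AlgebraicClosure F), (C y).degree < 3 := fun y =>
    lt_of_le_of_lt degree_C_le (by decide)
  have hdeg : P.degree = 3 := by
    rw [hP, degree_add_eq_left_of_degree_lt, degree_add_eq_left_of_degree_lt, hdeg3]
    · rw [hdeg3]; exact h1lt _
    · rw [degree_add_eq_left_of_degree_lt, hdeg3]
      · exact h0lt _
      · rw [hdeg3]; exact h1lt _
  have hndeg : P.natDegree = 3 := natDegree_eq_of_degree_eq_some hdeg
  have hPne : P ≠ 0 := fun h0 => by simp [h0] at hdeg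
  rw [irreducible_iff_roots_eq_zero_of_degree_le_three (by omega) (by omega)]
  rw [Multiset.eq_zero_iff_forall_notMem]
  intro x hx
  rw [mem_roots hPne] at hx
  exact hroot x hx
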